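/- arXiv:math/0311524 — 2 statements merged into one kernel-verified Lean document; each statement's English description precedes it below -/
import Mathlib

section
/- Let n ≥ 1 and let p be an integer with p > 2(n+1). Let J ⊂ [0,1] be the closed interval [1/p, 1 - 1/p] and A = Jⁿ ⊂ [0,1]ⁿ, viewed as a subset of the torus Pⁿ = ℝⁿ/ℤⁿ. Let ν = (1/(n+1),…,1/(n+1)) ∈ ℝⁿ. Then the translates A + cν (mod ℤⁿ) for c = 0, 1, …, n cover the whole torus: ⋃_{c=0}^{n} (A + cν mod ℤⁿ) = Pⁿ. Equivalently, for every x ∈ ℝⁿ there exists c ∈ {0,…,n} such that every coordinate of x - cν, reduced mod 1, lies in [1/p, 1 - 1/p]. -/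
lemma near_int_of_fract {y ε : ℝ} (hε : 0 < ε)
    (h : Int.fract y < ε ∨ 1 - ε < Int.fract y) : ∃ k : ℤ, |y - k| < ε := by
  have h1 : y - ⌊y⌋ = Int.fract y := Int.self_sub_floor y
  have hf0 : 0 ≤ Int.fract y := Int.fract_nonneg y
  have hf1 : Int.fract y < 1 := Int.fract_lt_one y
  rcases h with h | h
  · exact ⟨⌊y⌋, by rw [abs_lt]; constructor <;> linarith⟩
  · exact ⟨⌊y⌋ + 1, by push_cast; rw [abs_lt]; constructor <;> linarith⟩

/-- Lemma (covering the torus by shifts of the middle cube): for every `x ∈ ℝⁿ`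
there is a color `c ∈ {0,…,n}` such that every coordinate of `x - c·ν`,
reduced mod 1, lies in `[1/p, 1 - 1/p]`. -/
theorem torus_cover_by_shifts (n p : ℕ) (hn : 1 ≤ n) (hp : 2 * (n + 1) < p)
    (x : Fin n → ℝ) :
    ∃ c : ℕ, c ≤ n ∧ ∀ i : Fin n,
      Int.fract (x i - (c : ℝ) / ((n : ℝ) + 1)) ∈
        Set.Icc (1 / (p : ℝ)) (1 - 1 / p) := by
  classical
  have hp0 : (0:ℝ) < p := by
    have : 0 < p := lt_of_le_of_lt (Nat.zero_le _) hp
    exact_mod_cast this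
  have hN : (0:ℝ) < (n:ℝ) + 1 := by positivity
  have h2p : 2 / (p:ℝ) < 1 / ((n:ℝ) + 1) := by
    rw [div_lt_div_iff₀ hp0 hN]
    have : (2:ℝ) * ((n:ℝ) + 1) < p := by exact_mod_cast hp
    linarith
  set Bad : ℕ → Fin n → Prop := fun c i =>
    ¬ (Int.fract (x i - (c:ℝ) / ((n:ℝ) + 1)) ∈ Set.Icc (1 / (p:ℝ)) (1 - 1 / p))
    with hBad
  -- if bad, the point is within 1/p of an integer
  have near : ∀ c : ℕ, ∀ i : Fin n, Bad c i →
      ∃ k : ℤ, |x i - (c:ℝ) / ((n:ℝ) + 1) - k| < 1 / p := by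
    intro c i hb
    apply near_int_of_fract (by positivity)
    rw [hBad] at hb
    simp only [Set.mem_Icc, not_and_or, not_le] at hb
    exact hb
  -- uniqueness of the bad shift for each coordinate
  have uniq : ∀ c₁ c₂ : ℕ, ∀ i : Fin n, c₁ ≤ n → c₂ ≤ n →
      Bad c₁ i → Bad c₂ i → c₁ = c₂ := by
    have key : ∀ c₁ c₂ : ℕ, ∀ i : Fin n, c₁ < c₂ → c₂ ≤ n →
        Bad c₁ i → Bad c₂ i → False := by
      intro c₁ c₂ i hlt hle hb1 hb2
      obtain ⟨k₁, hk₁⟩ := near c₁ i hb1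
      obtain ⟨k₂, hk₂⟩ := near c₂ i hb2
      have habs : |((c₂:ℝ) - c₁) / ((n:ℝ) + 1) - ((k₁:ℝ) - k₂)| < 2 / p := by
        have e : ((c₂:ℝ) - c₁) / ((n:ℝ) + 1) - ((k₁:ℝ) - k₂) =
            (x i - (c₁:ℝ) / ((n:ℝ) + 1) - k₁) - (x i - (c₂:ℝ) / ((n:ℝ) + 1) - k₂) := by
          field_simp
          ring
        rw [e]
        calc |(x i - (c₁:ℝ) / ((n:ℝ) + 1) - k₁) - (x i - (c₂:ℝ) / ((n:ℝ) + 1) - k₂)|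
            ≤ |x i - (c₁:ℝ) / ((n:ℝ) + 1) - k₁| + |x i - (c₂:ℝ) / ((n:ℝ) + 1) - k₂| :=
              abs_sub _ _
          _ < 1 / p + 1 / p := add_lt_add hk₁ hk₂
          _ = 2 / p := by ring
      have habs' : |((c₂:ℝ) - c₁) / ((n:ℝ) + 1) - ((k₁:ℝ) - k₂)| < 1 / ((n:ℝ) + 1) :=
        habs.trans h2p
      set m : ℤ := k₁ - k₂ with hm
      have hd1 : (1:ℝ) ≤ (c₂:ℝ) - c₁ := by
        have : c₁ + 1 ≤ c₂ := hlt
        have := (Nat.cast_le (α := ℝ)).mpr this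
        push_cast at this; linarith
      have hd2 : (c₂:ℝ) - c₁ ≤ n := by
        have h1 : (c₂:ℝ) ≤ n := by exact_mod_cast hle
        have h2 : (0:ℝ) ≤ c₁ := Nat.cast_nonneg _
        linarith
      rw [abs_lt] at habs'
      rcases le_or_gt (m : ℤ) 0 with hm0 | hm0
      · have : ((k₁:ℝ) - k₂) ≤ 0 := by
          have : ((m:ℤ):ℝ) ≤ 0 := by exact_mod_cast hm0
          push_cast [hm] at this; linarith
        have hlb : 1 / ((n:ℝ) + 1) ≤ ((c₂:ℝ) - c₁) / ((n:ℝ) + 1) - ((k₁:ℝ) - k₂) := by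
          have : 1 / ((n:ℝ) + 1) ≤ ((c₂:ℝ) - c₁) / ((n:ℝ) + 1) := by
            apply div_le_div_of_nonneg_right hd1 hN.le
          linarith
        linarith [habs'.2]
      · have hm1 : (1:ℤ) ≤ m := hm0
        have : (1:ℝ) ≤ ((k₁:ℝ) - k₂) := by
          have : ((1:ℤ):ℝ) ≤ ((m:ℤ):ℝ) := by exact_mod_cast hm1
          push_cast [hm] at this; linarith
        have hub : ((c₂:ℝ) - c₁) / ((n:ℝ) + 1) ≤ (n:ℝ) / ((n:ℝ) + 1) := by
          exact div_le_div_of_nonneg_right hd2 hN.le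
        have hfrac : (n:ℝ) / ((n:ℝ) + 1) = 1 - 1 / ((n:ℝ) + 1) := by
          field_simp
          ring
        linarith [habs'.1]
    intro c₁ c₂ i h₁ h₂ hb1 hb2
    rcases lt_trichotomy c₁ c₂ with h | h | h
    · exact absurd (key c₁ c₂ i h h₂ hb1 hb2) (by simp)
    · exact h
    · exact absurd (key c₂ c₁ i h h₁ hb2 hb1) (by simp)
  -- pigeonhole
  set g : Fin n → ℕ := fun i =>
    if h : ∃ c, c ≤ n ∧ Bad c i then h.choose else 0 with hg
  have hcard : (Finset.image g Finset.univ).card < (Finset.range (n+1)).card := by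
    calc (Finset.image g Finset.univ).card ≤ Finset.univ.card :=
          Finset.card_image_le
      _ = n := by simp
      _ < n + 1 := Nat.lt_succ_self n
      _ = (Finset.range (n+1)).card := (Finset.card_range _).symm
  have hex0 : ∃ c ∈ Finset.range (n+1), c ∉ Finset.image g Finset.univ := by
    by_contra h
    push_neg at h
    exact absurd (Finset.card_le_card fun a ha => h a ha) (not_le.mpr hcard)
  obtain ⟨c, hcmem, hcnot⟩ := hex0
  refine ⟨c, Nat.lt_succ_iff.mp (Finset.mem_range.mp hcmem), ?_⟩
  intro i
  by_contra hb
  have hbad : Bad c i := hb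
  have hc_le : c ≤ n := Nat.lt_succ_iff.mp (Finset.mem_range.mp hcmem)
  have hex : ∃ c', c' ≤ n ∧ Bad c' i := ⟨c, hc_le, hbad⟩
  have hgi : g i ≤ n ∧ Bad (g i) i := by
    rw [hg]; simp only [dif_pos hex]
    exact hex.choose_spec
  have : c = g i := uniq c (g i) i hc_le hgi.1 hbad hgi.2
  exact hcnot (Finset.mem_image.mpr ⟨i, Finset.mem_univ i, this.symm⟩)
end

section
/- Let p ≥ 5 be an integer and λ = 1/p. Consider in ℝⁿ the cube A = [1/p,1-1/p]ⁿ, the family Q₀ = ⋃_{γ∈ℤⁿ} (γ + A), and for a word w = l₁…l_k of letters in L = {1,…,p}ⁿ the cube A_w = h_w(A), where h_l : [0,1]ⁿ → [0,1]ⁿ is the homothety with ratio 1/p onto the l-th subcube of the subdivision of [0,1]ⁿ into pⁿ congruent subcubes, and h_w = h_{l₁}∘…∘h_{l_k}. Then for w ∈ W_k and w' ∈ W_{k-1}: A_w ⊆ A_{w'} if and only if w' is the initial subword of w of length k-1 and every coordinate of the last letter l_k ∈ {1,…,p}ⁿ differs from 1 and p. -/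
/-- The homothety `h_l` of ratio `1/p` mapping `[0,1]ⁿ` onto its `l`-th subcube
(letters `l ∈ L = {0,…,p-1}ⁿ`, 0-indexed). -/
noncomputable def subcubeHomothety (n p : ℕ) (l : Fin n → Fin p) (x : Fin n → ℝ) :
    Fin n → ℝ :=
  fun i => (x i + (l i : ℝ)) / p

/-- `h_w` for a word `w = l₁…l_k`: the composition `h_{l₁} ∘ … ∘ h_{l_k}`. -/
noncomputable def wordHomothety (n p : ℕ) (w : List (Fin n → Fin p)) :
    (Fin n → ℝ) → (Fin n → ℝ) :=
  w.foldr (fun l f => subcubeHomothety n p l ∘ f) id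

namespace SubcubeAux

/-- The base-`p` number with digits the `i`-th coordinates of the letters of `w`. -/
def wNum {n : ℕ} (p : ℕ) : List (Fin n → Fin p) → Fin n → ℕ
  | [], _ => 0
  | l :: rest, i => l i * p ^ rest.length + wNum p rest i

lemma wNum_lt {n p : ℕ} (hp : 0 < p) (w : List (Fin n → Fin p)) (i : Fin n) :
    wNum p w i < p ^ w.length := by
  induction w with
  | nil => simp [wNum]
  | cons l rest ih =>
    have h1 : l i * p ^ rest.length + wNum p rest i < (l i + 1) * p ^ rest.length := by
      have := ih
      calc l i * p ^ rest.length + wNum p rest i < l i * p ^ rest.length + p ^ rest.length := by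
            omega
        _ = (l i + 1) * p ^ rest.length := by ring
    have h2 : ((l i : ℕ) + 1) * p ^ rest.length ≤ p * p ^ rest.length :=
      Nat.mul_le_mul_right _ (l i).isLt
    calc wNum p (l :: rest) i < ((l i : ℕ) + 1) * p ^ rest.length := h1
      _ ≤ p * p ^ rest.length := h2
      _ = p ^ (l :: rest).length := by rw [List.length_cons, pow_succ]; ring

lemma wordHomothety_apply {n p : ℕ} (hp : 0 < p) (w : List (Fin n → Fin p))
    (x : Fin n → ℝ) (i : Fin n) :
    wordHomothety n p w x i = (x i + (wNum p w i : ℝ)) / p ^ w.length := by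
  induction w with
  | nil => simp [wordHomothety, wNum]
  | cons l rest ih =>
    have hp' : (p : ℝ) ≠ 0 := by positivity
    have hpp : ((p : ℝ)) ^ rest.length ≠ 0 := by positivity
    show subcubeHomothety n p l (wordHomothety n p rest x) i = _
    rw [subcubeHomothety, ih]
    simp only [wNum, List.length_cons]
    push_cast
    field_simp
    ring

lemma wNum_append {n p : ℕ} (w' : List (Fin n → Fin p)) (l : Fin n → Fin p) (i : Fin n) :
    wNum p (w' ++ [l]) i = p * wNum p w' i + l i := by
  induction w' with
  | nil => simp [wNum]
  | cons a rest ih =>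
    simp only [List.cons_append, wNum, ih, List.length_append, List.length_singleton,
      List.append_eq]
    ring

lemma wNum_inj {n p : ℕ} (hp : 0 < p) :
    ∀ w w' : List (Fin n → Fin p), w.length = w'.length →
      (∀ i, wNum p w i = wNum p w' i) → w = w' := by
  intro w
  induction w with
  | nil => intro w' hl _; exact (List.length_eq_zero_iff.mp hl.symm).symm
  | cons l rest ih =>
    intro w' hl h
    match w' with
    | [] => simp at hl
    | l' :: rest' =>
      have hlen : rest.length = rest'.length := by simpa using hl
      have key : ∀ i : Fin n, (l i : ℕ) = l' i ∧ wNum p rest i = wNum p rest' i := by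
        intro i
        have h1 := h i
        simp only [wNum] at h1
        rw [hlen] at h1
        have hr : wNum p rest i < p ^ rest'.length := by rw [← hlen]; exact wNum_lt hp rest i
        have hr' : wNum p rest' i < p ^ rest'.length := wNum_lt hp rest' i
        set q := p ^ rest'.length with hq
        have hq0 : 0 < q := by positivity
        have hd : (l i : ℕ) = l' i := by
          have e1 : (wNum p rest i + (l i : ℕ) * q) / q = (l i : ℕ) := by
            rw [Nat.add_mul_div_right _ _ hq0, Nat.div_eq_of_lt hr, Nat.zero_add]
          have e2 : (wNum p rest' i + (l' i : ℕ) * q) / q = (l' i : ℕ) := by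
            rw [Nat.add_mul_div_right _ _ hq0, Nat.div_eq_of_lt hr', Nat.zero_add]
          have h1' : wNum p rest i + (l i : ℕ) * q = wNum p rest' i + (l' i : ℕ) * q := by
            omega
          rw [← e1, ← e2, h1']
        constructor
        · exact hd
        · rw [hd] at h1; omega
      have h2 : l = l' := by
        funext i; exact Fin.ext (key i).1
      have h3 : rest = rest' := ih rest' hlen fun i => (key i).2
      rw [h2, h3]

lemma image_eq {n p : ℕ} (hp : 5 ≤ p) (w : List (Fin n → Fin p)) :
    wordHomothety n p w '' {x | ∀ i, x i ∈ Set.Icc (1 / (p : ℝ)) (1 - 1 / p)} =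
      {y | ∀ i, y i ∈ Set.Icc ((1 / (p : ℝ) + wNum p w i) / p ^ w.length)
        ((1 - 1 / (p : ℝ) + wNum p w i) / p ^ w.length)} := by
  have hp0 : 0 < p := by omega
  have hP : (0 : ℝ) < p := by exact_mod_cast hp0
  have hPk : (0 : ℝ) < (p : ℝ) ^ w.length := by positivity
  ext y
  constructor
  · rintro ⟨x, hx, rfl⟩ i
    rw [wordHomothety_apply hp0]
    obtain ⟨h1, h2⟩ := hx i
    constructor
    · gcongr
    · gcongr
  · intro hy
    refine ⟨fun j => y j * p ^ w.length - wNum p w j, fun j => ?_, ?_⟩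
    · obtain ⟨h1, h2⟩ := hy j
      rw [div_le_iff₀ hPk] at h1
      rw [le_div_iff₀ hPk] at h2
      constructor <;> [linarith; linarith]
    · funext i
      rw [wordHomothety_apply hp0]
      field_simp
      ring

end SubcubeAux

namespace SubcubeAux

lemma div_pow_le_one {p : ℝ} (hp : 0 < p) (k : ℕ) (X Y : ℝ) :
    X / p ^ k ≤ Y / p ^ (k + 1) ↔ X * p ≤ Y := by
  have hq : (0 : ℝ) < p ^ k := by positivity
  rw [pow_succ, ← div_div, le_div_iff₀ hp, div_mul_eq_mul_div, div_le_div_iff_of_pos_right hq]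

lemma div_pow_le_two {p : ℝ} (hp : 0 < p) (k : ℕ) (X Y : ℝ) :
    X / p ^ (k + 1) ≤ Y / p ^ k ↔ X ≤ Y * p := by
  have hq : (0 : ℝ) < p ^ k := by positivity
  rw [pow_succ, ← div_div, div_le_iff₀ hp, div_mul_eq_mul_div, div_le_div_iff_of_pos_right hq]

end SubcubeAux

/-- For words `w ∈ W_k`, `w' ∈ W_{k-1}`: `A_w ⊆ A_{w'}` iff `w'` is the initial
subword of `w` and every coordinate of the last letter of `w` differs from the two
extreme values (1 and p in 1-indexed notation, i.e. `0` and `p-1` here). -/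
theorem subcube_containment (n p : ℕ) (hp : 5 ≤ p)
    (A : Set (Fin n → ℝ))
    (hA : A = {x | ∀ i, x i ∈ Set.Icc (1 / (p : ℝ)) (1 - 1 / p)})
    (k : ℕ) (hk : 1 ≤ k) (w w' : List (Fin n → Fin p))
    (hw : w.length = k) (hw' : w'.length = k - 1) :
    wordHomothety n p w '' A ⊆ wordHomothety n p w' '' A ↔
      ∃ l : Fin n → Fin p, w = w' ++ [l] ∧
        ∀ i : Fin n, (l i : ℕ) ≠ 0 ∧ (l i : ℕ) ≠ p - 1 := by
  subst hA
  have hp0 : 0 < p := by omega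
  have hP5 : (5 : ℝ) ≤ p := by exact_mod_cast hp
  have hP0 : (0 : ℝ) < p := by linarith
  have hPne : (p : ℝ) ≠ 0 := ne_of_gt hP0
  have h1P : 1 / (p : ℝ) < 1 := by rw [div_lt_one hP0]; linarith
  have h1Ppos : (0 : ℝ) < 1 / p := by positivity
  obtain ⟨k', rfl⟩ : ∃ k', k = k' + 1 := ⟨k - 1, by omega⟩
  have hw'l : w'.length = k' := by simpa using hw'
  rw [SubcubeAux.image_eq hp, SubcubeAux.image_eq hp, hw, hw'l]
  have hlohi : ∀ c : ℕ, (1 / (p:ℝ) + c) / (p:ℝ) ^ (k' + 1) ≤ (1 - 1/(p:ℝ) + c) / (p:ℝ) ^ (k' + 1) := by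
    intro c
    have h15 : 1 / (p:ℝ) ≤ 1 / 5 := by
      apply one_div_le_one_div_of_le <;> linarith
    gcongr
    linarith
  have hexp1 : ∀ c : ℕ, (1 / (p:ℝ) + c) * p = 1 + (c : ℝ) * p := by
    intro c; rw [add_mul, one_div_mul_cancel hPne]
  have hexp2 : ∀ c : ℕ, (1 - 1 / (p:ℝ) + c) * p = (p : ℝ) - 1 + (c : ℝ) * p := by
    intro c; rw [add_mul, sub_mul, one_mul, one_div_mul_cancel hPne]
  have main : ({y : Fin n → ℝ | ∀ i, y i ∈ Set.Icc ((1/(p:ℝ) + SubcubeAux.wNum p w i) / (p:ℝ)^(k'+1))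
        ((1 - 1/(p:ℝ) + SubcubeAux.wNum p w i) / (p:ℝ)^(k'+1))} ⊆
      {y : Fin n → ℝ | ∀ i, y i ∈ Set.Icc ((1/(p:ℝ) + SubcubeAux.wNum p w' i) / (p:ℝ)^k')
        ((1 - 1/(p:ℝ) + SubcubeAux.wNum p w' i) / (p:ℝ)^k')}) ↔
      ∀ i, p * SubcubeAux.wNum p w' i + 1 ≤ SubcubeAux.wNum p w i ∧
        SubcubeAux.wNum p w i ≤ p * SubcubeAux.wNum p w' i + (p - 2) := by
    constructor
    · intro h i
      have hsub : Set.Icc ((1/(p:ℝ) + SubcubeAux.wNum p w i) / (p:ℝ)^(k'+1))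
          ((1 - 1/(p:ℝ) + SubcubeAux.wNum p w i) / (p:ℝ)^(k'+1)) ⊆
          Set.Icc ((1/(p:ℝ) + SubcubeAux.wNum p w' i) / (p:ℝ)^k')
          ((1 - 1/(p:ℝ) + SubcubeAux.wNum p w' i) / (p:ℝ)^k') := by
        intro t ht
        have hy : (Function.update
            (fun j => (1/(p:ℝ) + SubcubeAux.wNum p w j) / (p:ℝ)^(k'+1)) i t) ∈
            {y : Fin n → ℝ | ∀ i, y i ∈ Set.Icc ((1/(p:ℝ) + SubcubeAux.wNum p w i) / (p:ℝ)^(k'+1))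
              ((1 - 1/(p:ℝ) + SubcubeAux.wNum p w i) / (p:ℝ)^(k'+1))} := by
          intro j
          by_cases hj : j = i
          · subst hj; rw [Function.update_self]; exact ht
          · rw [Function.update_of_ne hj]
            exact ⟨le_rfl, hlohi _⟩
        have := h hy i
        rwa [Function.update_self] at this
      rw [Set.Icc_subset_Icc_iff (hlohi _)] at hsub
      obtain ⟨h1, h2⟩ := hsub
      rw [SubcubeAux.div_pow_le_one hP0] at h1
      rw [SubcubeAux.div_pow_le_two hP0] at h2
      rw [hexp1] at h1
      rw [hexp2] at h2
      constructor
      · have hnat : p * SubcubeAux.wNum p w' i < SubcubeAux.wNum p w i := by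
          have : ((p * SubcubeAux.wNum p w' i : ℕ) : ℝ) < (SubcubeAux.wNum p w i : ℕ) := by
            push_cast; linarith
          exact_mod_cast this
        exact hnat
      · have hnat2 : SubcubeAux.wNum p w i < p * SubcubeAux.wNum p w' i + (p - 1) := by
          have : ((SubcubeAux.wNum p w i : ℕ) : ℝ) <
              ((p * SubcubeAux.wNum p w' i + (p - 1) : ℕ) : ℝ) := by
            push_cast [Nat.cast_sub (show 1 ≤ p by omega)]
            linarith
          exact_mod_cast this
        generalize p * SubcubeAux.wNum p w' i = c at hnat2 ⊢
        omega
    · intro h y hy i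
      obtain ⟨h1, h2⟩ := hy i
      obtain ⟨g1, g2⟩ := h i
      constructor
      · refine le_trans ?_ h1
        rw [SubcubeAux.div_pow_le_one hP0, hexp1]
        have : ((p * SubcubeAux.wNum p w' i + 1 : ℕ) : ℝ) ≤ (SubcubeAux.wNum p w i : ℕ) := by
          exact_mod_cast g1
        push_cast at this
        linarith
      · refine le_trans h2 ?_
        rw [SubcubeAux.div_pow_le_two hP0, hexp2]
        have : ((SubcubeAux.wNum p w i : ℕ) : ℝ) ≤
            ((p * SubcubeAux.wNum p w' i + (p - 2) : ℕ) : ℝ) := by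
          exact_mod_cast g2
        push_cast [Nat.cast_sub (show 2 ≤ p by omega)] at this
        linarith
  rw [main]
  constructor
  · intro h
    have hwne : w ≠ [] := by intro h0; simp [h0] at hw
    obtain ⟨u, m, rfl⟩ : ∃ u m, w = u ++ [m] :=
      ⟨w.dropLast, w.getLast hwne, (List.dropLast_append_getLast hwne).symm⟩
    have hul : u.length = k' := by
      have := hw; simp [List.length_append] at this; omega
    have key : ∀ i, SubcubeAux.wNum p u i = SubcubeAux.wNum p w' i ∧
        1 ≤ (m i : ℕ) ∧ (m i : ℕ) ≤ p - 2 := by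
      intro i
      have h1 := h i
      rw [SubcubeAux.wNum_append] at h1
      obtain ⟨ha, hb⟩ := h1
      have hm : (m i : ℕ) < p := (m i).isLt
      have hba : SubcubeAux.wNum p u i = SubcubeAux.wNum p w' i := by
        have h5 : SubcubeAux.wNum p w' i < SubcubeAux.wNum p u i + 1 := by
          refine Nat.lt_of_mul_lt_mul_left (a := p) ?_
          calc p * SubcubeAux.wNum p w' i < p * SubcubeAux.wNum p w' i + 1 := Nat.lt_succ_self _
            _ ≤ p * SubcubeAux.wNum p u i + (m i : ℕ) := ha
            _ < p * SubcubeAux.wNum p u i + p := Nat.add_lt_add_left hm _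
            _ = p * (SubcubeAux.wNum p u i + 1) := (Nat.mul_succ p _).symm
        have h6 : SubcubeAux.wNum p u i < SubcubeAux.wNum p w' i + 1 := by
          refine Nat.lt_of_mul_lt_mul_left (a := p) ?_
          calc p * SubcubeAux.wNum p u i ≤ p * SubcubeAux.wNum p u i + (m i : ℕ) :=
                Nat.le_add_right _ _
            _ ≤ p * SubcubeAux.wNum p w' i + (p - 2) := hb
            _ < p * SubcubeAux.wNum p w' i + p := Nat.add_lt_add_left (by omega) _
            _ = p * (SubcubeAux.wNum p w' i + 1) := (Nat.mul_succ p _).symm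
        omega
      refine ⟨hba, ?_, ?_⟩
      · rw [hba] at ha
        generalize p * SubcubeAux.wNum p w' i = c at ha
        omega
      · rw [hba] at hb
        generalize p * SubcubeAux.wNum p w' i = c at hb
        omega
    have hu : u = w' := SubcubeAux.wNum_inj hp0 u w' (by rw [hul, hw'l]) fun i => (key i).1
    refine ⟨m, by rw [hu], fun i => ?_⟩
    obtain ⟨-, hm1, hm2⟩ := key i
    omega
  · rintro ⟨l, rfl, hl⟩ i
    rw [SubcubeAux.wNum_append]
    have hm : (l i : ℕ) < p := (l i).isLt
    obtain ⟨hl1, hl2⟩ := hl i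
    have : 1 ≤ (l i : ℕ) ∧ (l i : ℕ) ≤ p - 2 := by omega
    exact ⟨Nat.add_le_add_left this.1 _, Nat.add_le_add_left this.2 _⟩
end
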